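/- For all planar binary trees x, y in the Tamari poset, the over product satisfies x/y ≤ x\y. -/

import Mathlib

/-- Planar binary trees: a leaf `∘` or an ordered pair of planar binary trees. -/
inductive PBT : Type
  | leaf : PBT
  | node : PBT → PBT → PBT
deriving DecidableEq

namespace PBT

/-- The degree: the number of internal vertices. -/
def deg : PBT → ℕ
  | leaf => 0
  | node l r => deg l + deg r + 1

/-- The over product `x/y`: graft the root of `x` onto the leftmost leaf of `y`. -/
def overProd (x : PBT) : PBT → PBT
  | leaf => x
  | node l r => node (overProd x l) r

/-- The under product `x\y`: graft the root of `y` onto the rightmost leaf of `x`. -/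
def under : PBT → PBT → PBT
  | leaf, y => y
  | node l r, y => node l (under r y)

/-- Left-right reversal: swap the two subtrees at every internal vertex. -/
def rev : PBT → PBT
  | leaf => leaf
  | node l r => node (rev r) (rev l)

/-- `move x y` : `y` is obtained from `x` by one elementary Tamari move,
replacing a subtree `(a (b c))` by `((a b) c)` (a right rotation, going down). -/
inductive move : PBT → PBT → Prop
  | rot (a b c : PBT) : move (node a (node b c)) (node (node a b) c)
  | left {a a' : PBT} (b : PBT) : move a a' → move (node a b) (node a' b)
  | right (a : PBT) {b b' : PBT} : move b b' → move (node a b) (node a b')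

/-- The Tamari order: `x ≤ y` iff `x` is obtained from `y` by a sequence of
elementary moves. -/
def tle (x y : PBT) : Prop := Relation.ReflTransGen move y x

/-- The left comb of degree `n`. -/
def leftComb : ℕ → PBT
  | 0 => leaf
  | n+1 => node (leftComb n) leaf

/-- The right comb of degree `n`. -/
def rightComb : ℕ → PBT
  | 0 => leaf
  | n+1 => node leaf (rightComb n)

end PBT


namespace PBT

lemma under_leaf (x : PBT) : under x leaf = x := by
  induction x with
  | leaf => rfl
  | node l r ihl ihr => simp [under, ihr]

lemma tle_left {a a' : PBT} (b : PBT) (h : tle a a') : tle (node a b) (node a' b) :=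
  Relation.ReflTransGen.head_induction_on h .refl
    (fun hm _ ih => Relation.ReflTransGen.head (move.left b hm) ih)

lemma tle_right (a : PBT) {b b' : PBT} (h : tle b b') : tle (node a b) (node a b') :=
  Relation.ReflTransGen.head_induction_on h .refl
    (fun hm _ ih => Relation.ReflTransGen.head (move.right a hm) ih)

lemma tle_trans {a b c : PBT} (h1 : tle a b) (h2 : tle b c) : tle a c :=
  Relation.ReflTransGen.trans h2 h1

lemma under_node_tle (x p q : PBT) : tle (node (under x p) q) (under x (node p q)) := by
  induction x with
  | leaf => exact .refl
  | node l r ihl ihr =>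
    have h1 : tle (node l (node (under r p) q)) (node l (under r (node p q))) :=
      tle_right l ihr
    have h2 : tle (node (node l (under r p)) q) (node l (node (under r p) q)) :=
      Relation.ReflTransGen.single (move.rot l (under r p) q)
    exact tle_trans h2 h1

end PBT

/-- For all planar binary trees `x, y`, one has `x/y ≤ x\y` in the Tamari order. -/
theorem stmt8 (x y : PBT) : PBT.tle (x.overProd y) (x.under y) := by
  induction y generalizing x with
  | leaf => rw [PBT.under_leaf]; exact .refl
  | node p q ihp ihq =>
    have h1 : PBT.tle (PBT.node (x.overProd p) q) (PBT.node (x.under p) q) :=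
      PBT.tle_left q (ihp x)
    exact PBT.tle_trans h1 (PBT.under_node_tle x p q)
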